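/- For m ≥ 3 and n ≥ 3, the constraint matrix A of the fixed-support Wasserstein barycenter LP, defined in block form with first m block-rows (−1)^k (I_n ⊗ 1_n^T) in block column k (and zeros elsewhere), and m−1 further block-rows in which block-row m+k has (−1)^{k+1}(1_n^T ⊗ I_n) in block column k and (−1)^{k}(1_n^T ⊗ I_n) in block column k+1, is not totally unimodular. -/

import Mathlib

/-- A matrix with integer entries is totally unimodular if every square submatrix
has determinant in {-1, 0, 1}. -/
def IsTotallyUnimodular' {α β : Type*} (A : Matrix α β ℤ) : Prop :=
  ∀ (k : ℕ) (f : Fin k → α) (g : Fin k → β),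
    Function.Injective f → Function.Injective g →
      (A.submatrix f g).det ∈ ({-1, 0, 1} : Set ℤ)

/-- The constraint matrix of the fixed-support Wasserstein barycenter LP.
Rows `Sum.inl (k, i)` are the `m` upper block-rows: block-row `k` (`0`-indexed) carries
`(-1)^(k+1) • (Iₙ ⊗ 1ₙᵀ)` in block column `k` (so `(-1)^k` for `1`-indexed `k`), with
`(Iₙ ⊗ 1ₙᵀ)_{i,(p,q)} = δ_{ip}`.  Rows `Sum.inr (k, j)` are the `m - 1` lower block-rows:
block-row `k` (`0`-indexed) carries `(-1)^k • (1ₙᵀ ⊗ Iₙ)` in block column `k` and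
`(-1)^(k+1) • (1ₙᵀ ⊗ Iₙ)` in block column `k + 1`, with `(1ₙᵀ ⊗ Iₙ)_{j,(p,q)} = δ_{jq}`.
Columns are indexed by `(l, p, q)`: entry `(p, q)` of `vec(X_l)`. -/
def barycenterConstraintMatrix (m n : ℕ) :
    Matrix ((Fin m × Fin n) ⊕ (Fin (m - 1) × Fin n)) (Fin m × Fin n × Fin n) ℤ :=
  fun r c =>
    match r with
    | Sum.inl (k, i) => if c.1 = k ∧ c.2.1 = i then (-1) ^ (k.val + 1) else 0
    | Sum.inr (k, j) =>
        if c.2.2 = j then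
          (if c.1.val = k.val then (-1) ^ k.val
           else if c.1.val = k.val + 1 then (-1) ^ (k.val + 1) else 0)
        else 0

/-- The 7×7 violating submatrix. -/
def barycenterM7 : Matrix (Fin 7) (Fin 7) ℤ :=
 !![-1,-1, 0, 0, 0, 0, 0;
     0, 0, 1, 1, 0, 0, 0;
     0, 0, 0, 0, 0,-1,-1;
     1, 0, 0, 0,-1, 0, 0;
     0, 1,-1, 0, 0, 0, 0;
     0, 0, 0, 0,-1, 1, 0;
     0, 0, 0,-1, 0, 0, 1]

/-- Minor of `barycenterM7` obtained by deleting row 0 and column 0. -/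
def barycenterA0 : Matrix (Fin 6) (Fin 6) ℤ :=
 !![0,1,1,0,0,0;0,0,0,0,-1,-1;0,0,0,-1,0,0;1,-1,0,0,0,0;0,0,0,-1,1,0;0,0,-1,0,0,1]

/-- Minor of `barycenterM7` obtained by deleting row 0 and column 1. -/
def barycenterA1 : Matrix (Fin 6) (Fin 6) ℤ :=
 !![0,1,1,0,0,0;0,0,0,0,-1,-1;1,0,0,-1,0,0;0,-1,0,0,0,0;0,0,0,-1,1,0;0,0,-1,0,0,1]

set_option maxHeartbeats 1000000 in
set_option maxRecDepth 8000 in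
lemma barycenterA0_det : barycenterA0.det = -1 := by
  norm_num [barycenterA0, Matrix.det_succ_row_zero, Fin.sum_univ_succ]
  decide

set_option maxHeartbeats 1000000 in
set_option maxRecDepth 8000 in
lemma barycenterA1_det : barycenterA1.det = 1 := by
  norm_num [barycenterA1, Matrix.det_succ_row_zero, Fin.sum_univ_succ]
  decide

set_option maxHeartbeats 1000000 in
set_option maxRecDepth 8000 in
lemma barycenterM7_det : barycenterM7.det = 2 := by
  have e0 : barycenterM7.submatrix Fin.succ ((0 : Fin 7).succAbove) = barycenterA0 := by
    ext i j; fin_cases i <;> fin_cases j <;> rfl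
  have e1 : barycenterM7.submatrix Fin.succ ((Fin.succ 0 : Fin 7).succAbove) = barycenterA1 := by
    ext i j; fin_cases i <;> fin_cases j <;> rfl
  rw [Matrix.det_succ_row_zero]
  simp only [Fin.sum_univ_succ, Fin.sum_univ_zero]
  rw [e0, e1, barycenterA0_det, barycenterA1_det]
  norm_num [barycenterM7, Matrix.cons_val_zero, Matrix.cons_val_one, Matrix.head_cons,
    Matrix.cons_val_succ, Matrix.cons_val]
  rfl

set_option maxHeartbeats 1000000 in
set_option maxRecDepth 8000 in
theorem barycenter_matrix_not_TU {m n : ℕ} (hm : 3 ≤ m) (hn : 3 ≤ n) :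
    ¬ IsTotallyUnimodular' (barycenterConstraintMatrix m n) := by
  intro hTU
  have ha0 : (0 : ℕ) < m := by omega
  have ha1 : (1 : ℕ) < m := by omega
  have ha2 : (2 : ℕ) < m := by omega
  have hc0 : (0 : ℕ) < m - 1 := by omega
  have hc1 : (1 : ℕ) < m - 1 := by omega
  have hb0 : (0 : ℕ) < n := by omega
  have hb1 : (1 : ℕ) < n := by omega
  have hb2 : (2 : ℕ) < n := by omega
  let f : Fin 7 → (Fin m × Fin n) ⊕ (Fin (m - 1) × Fin n) :=
    ![Sum.inl (⟨0, ha0⟩, ⟨0, hb0⟩), Sum.inl (⟨1, ha1⟩, ⟨0, hb0⟩), Sum.inl (⟨2, ha2⟩, ⟨0, hb0⟩),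
      Sum.inr (⟨0, hc0⟩, ⟨0, hb0⟩), Sum.inr (⟨0, hc0⟩, ⟨1, hb1⟩),
      Sum.inr (⟨1, hc1⟩, ⟨0, hb0⟩), Sum.inr (⟨1, hc1⟩, ⟨2, hb2⟩)]
  let g : Fin 7 → Fin m × Fin n × Fin n :=
    ![(⟨0, ha0⟩, ⟨0, hb0⟩, ⟨0, hb0⟩), (⟨0, ha0⟩, ⟨0, hb0⟩, ⟨1, hb1⟩),
      (⟨1, ha1⟩, ⟨0, hb0⟩, ⟨1, hb1⟩), (⟨1, ha1⟩, ⟨0, hb0⟩, ⟨2, hb2⟩),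
      (⟨1, ha1⟩, ⟨1, hb1⟩, ⟨0, hb0⟩), (⟨2, ha2⟩, ⟨0, hb0⟩, ⟨0, hb0⟩),
      (⟨2, ha2⟩, ⟨0, hb0⟩, ⟨2, hb2⟩)]
  have hfi : Function.Injective f := by
    have h1 : Function.Injective
        ((Sum.map (fun p : Fin m × Fin n => (p.1.val, p.2.val))
          (fun p : Fin (m-1) × Fin n => (p.1.val, p.2.val))) ∘ f) := by
      have h2 : (Sum.map (fun p : Fin m × Fin n => (p.1.val, p.2.val))
          (fun p : Fin (m-1) × Fin n => (p.1.val, p.2.val))) ∘ f =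
          ![Sum.inl (0,0), Sum.inl (1,0), Sum.inl (2,0), Sum.inr (0,0), Sum.inr (0,1),
            Sum.inr (1,0), Sum.inr (1,2)] := by
        funext x; fin_cases x <;> rfl
      rw [h2]; decide
    exact Function.Injective.of_comp h1
  have hgi : Function.Injective g := by
    have h1 : Function.Injective
        ((fun p : Fin m × Fin n × Fin n => (p.1.val, p.2.1.val, p.2.2.val)) ∘ g) := by
      have h2 : (fun p : Fin m × Fin n × Fin n => (p.1.val, p.2.1.val, p.2.2.val)) ∘ g =
          ![(0,0,0),(0,0,1),(1,0,1),(1,0,2),(1,1,0),(2,0,0),(2,0,2)] := by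
        funext x; fin_cases x <;> rfl
      rw [h2]; decide
    exact Function.Injective.of_comp h1
  have key := hTU 7 f g hfi hgi
  have hM : (barycenterConstraintMatrix m n).submatrix f g = barycenterM7 := by
    ext i j
    fin_cases i <;> fin_cases j <;> simp [barycenterConstraintMatrix, barycenterM7, f, g]
  rw [hM, barycenterM7_det] at key
  simp at key
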